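/- Let φ1, φ2, X1, X2 be positive reals and β ∈ (0,1]. Define U2(τ) = φ2·(1 − 1/(2·(X2 + τ))) + (1/2)·√( φ1·φ2·(X1 − β·τ)/(X2 + τ) ) on (−X2, X1/β). Then the derivative of U2 at τ = 0 is strictly negative if and only if β > √(4·φ2·X1/(φ1·X2^3)) − X1/X2. -/

import Mathlib

noncomputable section

/-- In Case 2, Player 2's payoff has strictly negative derivative at `τ = 0`
iff `β > √(4φ2X1/(φ1X2³)) − X1/X2`. -/
theorem case2_payoff2_deriv_neg_iff (φ1 φ2 X1 X2 β : ℝ)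
    (hφ1 : 0 < φ1) (hφ2 : 0 < φ2) (hX1 : 0 < X1) (hX2 : 0 < X2)
    (hβ0 : 0 < β) (hβ1 : β ≤ 1) :
    deriv (fun τ : ℝ => φ2 * (1 - 1 / (2 * (X2 + τ))) +
        (1 / 2) * Real.sqrt (φ1 * φ2 * (X1 - β * τ) / (X2 + τ))) 0 < 0 ↔
      β > Real.sqrt (4 * φ2 * X1 / (φ1 * X2 ^ 3)) - X1 / X2 := by
  have hX2' : (2:ℝ) * (X2 + 0) ≠ 0 := by positivity
  have hX2'' : X2 + (0:ℝ) ≠ 0 := by positivity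
  have hg0 : φ1 * φ2 * (X1 - β * 0) / (X2 + 0) ≠ 0 := by
    simp only [mul_zero, sub_zero, add_zero]; positivity
  have hv : HasDerivAt (fun τ : ℝ => X2 + τ) 1 0 := by
    simpa using (hasDerivAt_id (0:ℝ)).const_add X2
  have ha : HasDerivAt (fun τ : ℝ => 2 * (X2 + τ)) 2 0 := by
    simpa using hv.const_mul 2
  have hinv := ha.inv hX2'
  have h1 : HasDerivAt (fun τ : ℝ => φ2 * (1 - 1 / (2 * (X2 + τ))))
      (φ2 * (-(-2 / (2 * (X2 + 0)) ^ 2))) 0 := by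
    simpa [one_div] using ((hinv.const_sub 1).const_mul φ2)
  have hu : HasDerivAt (fun τ : ℝ => φ1 * φ2 * (X1 - β * τ)) (φ1 * φ2 * (-(β * 1))) 0 := by
    simpa using (((hasDerivAt_id (0:ℝ)).const_mul β).const_sub X1).const_mul (φ1 * φ2)
  have hg := hu.div hv hX2''
  have hsq := (hg.sqrt hg0).const_mul (1/2 : ℝ)
  have hF := h1.add hsq
  have hF' : HasDerivAt (fun τ : ℝ => φ2 * (1 - 1 / (2 * (X2 + τ))) +
      (1 / 2) * Real.sqrt (φ1 * φ2 * (X1 - β * τ) / (X2 + τ))) _ 0 := hF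
  rw [hF'.deriv]
  simp only [Pi.div_apply, mul_zero, sub_zero, add_zero, mul_one]
  set s := Real.sqrt (φ1 * φ2 * X1 / X2) with hs_def
  set t := Real.sqrt (4 * φ2 * X1 / (φ1 * X2 ^ 3)) with ht_def
  have hs0 : 0 < s := Real.sqrt_pos.mpr (by positivity)
  have h2st : φ1 * X2 * t = 2 * s := by
    have e1 : φ1 * X2 * t = Real.sqrt ((φ1 * X2) ^ 2 * (4 * φ2 * X1 / (φ1 * X2 ^ 3))) := by
      rw [Real.sqrt_mul (by positivity), Real.sqrt_sq (by positivity)]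
    have e2 : 2 * s = Real.sqrt ((2:ℝ) ^ 2 * (φ1 * φ2 * X1 / X2)) := by
      rw [Real.sqrt_mul (by positivity), Real.sqrt_sq (by norm_num)]
    rw [e1, e2]
    congr 1
    field_simp
    ring
  have hEeq : φ2 * -(-2 / (2 * X2) ^ 2) +
      1 / 2 * ((φ1 * φ2 * -β * X2 - φ1 * φ2 * X1) / X2 ^ 2 / (2 * s)) =
      (φ1 * φ2 * X2 / (4 * X2 ^ 2 * s)) * ((t - X1 / X2) - β) := by
    field_simp
    linear_combination (-4) * h2st
  rw [hEeq]
  have hC : 0 < φ1 * φ2 * X2 / (4 * X2 ^ 2 * s) := by positivity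
  constructor
  · intro h
    by_contra h'
    push_neg at h'
    nlinarith
  · intro h
    exact mul_neg_of_pos_of_neg hC (by linarith)
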